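/- Let α ∈ (0,1) be irrational and ℓ ≥ 2 an integer. The set of values max L_β(ℓ), where β ranges over irrationals whose continued fraction expansion eventually agrees with that of α (equivalent numbers), and max L_β(ℓ) is the maximal length of the intervals into which the points 0, {-β}, …, {-ℓβ} divide the unit circle, is dense in the interval (1/(ℓ+1), 1). -/

import Mathlib

/-- The points `{-j α}` for `0 ≤ j ≤ ℓ`, viewed in `[0,1)` (the unit circle). -/
def circlePoints (α : ℝ) (ℓ : ℕ) : Set ℝ :=
  {x | ∃ j : ℕ, j ≤ ℓ ∧ x = Int.fract (-(j : ℝ) * α)}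

/-- The length of the arc starting at `x` and going in the positive direction
until the next point of `P` (on the circle `ℝ/ℤ`). -/
noncomputable def arcLen (P : Set ℝ) (x : ℝ) : ℝ :=
  sInf {d : ℝ | 0 < d ∧ Int.fract (x + d) ∈ P}

/-- The maximal length of the arcs into which the points of `P` divide the circle. -/
noncomputable def maxArc (P : Set ℝ) : ℝ := sSup (arcLen P '' P)

/-- The `t`-th partial quotient of the continued fraction expansion of `α`,
obtained by iterating the Gauss map `y ↦ 1 / fract y`. -/
noncomputable def partialQuotient (α : ℝ) (t : ℕ) : ℤ :=
  ⌊(fun y : ℝ => (Int.fract y)⁻¹)^[t] α⌋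

/-- Two numbers are equivalent if their continued fraction expansions eventually agree. -/
def CFEquiv (α β : ℝ) : Prop :=
  ∃ N M : ℕ, ∀ i : ℕ, partialQuotient α (N + i) = partialQuotient β (M + i)

noncomputable def Tg : ℝ → ℝ := fun y : ℝ => (Int.fract y)⁻¹

noncomputable def gmap (n : ℕ) (y : ℝ) : ℝ := ((n : ℝ) + y)⁻¹

noncomputable def comp2 : List (ℕ × ℕ) → ℝ → ℝ
  | [], u => u
  | p :: L, u => gmap p.1 (gmap p.2 (comp2 L u))

lemma fract_of_mem {y : ℝ} (hy : y ∈ Set.Ioo (0:ℝ) 1) : Int.fract y = y :=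
  Int.fract_eq_self.mpr ⟨le_of_lt hy.1, hy.2⟩

lemma gmap_mem {n : ℕ} (hn : 1 ≤ n) {y : ℝ} (hy : y ∈ Set.Ioo (0:ℝ) 1) :
    gmap n y ∈ Set.Ioo (0:ℝ) 1 := by
  have h1 : (1:ℝ) ≤ n := by exact_mod_cast hn
  have hpos : (0:ℝ) < (n:ℝ) + y := by linarith [hy.1]
  constructor
  · exact inv_pos.mpr hpos
  · show ((n:ℝ) + y)⁻¹ < 1
    rw [inv_lt_one_iff₀]
    right; linarith [hy.1]

lemma gmap_irrational {n : ℕ} {y : ℝ} (hy : Irrational y) : Irrational (gmap n y) :=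
  ((hy.natCast_add n).inv)

lemma Tg_Tg_gmap {n : ℕ} (hn : 1 ≤ n) {y : ℝ} (hy : y ∈ Set.Ioo (0:ℝ) 1) :
    Tg (Tg (gmap n y)) = Tg y := by
  have hg := gmap_mem hn hy
  have h1 : Tg (gmap n y) = (n:ℝ) + y := by
    show (Int.fract (gmap n y))⁻¹ = (n:ℝ) + y
    rw [fract_of_mem hg]
    simp [gmap]
  rw [h1]
  show (Int.fract ((n:ℝ) + y))⁻¹ = (Int.fract y)⁻¹
  rw [show ((n:ℝ) + y) = ((n:ℤ):ℝ) + y by push_cast; ring, Int.fract_intCast_add]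

lemma Tg4_pair {a b : ℕ} (ha : 1 ≤ a) (hb : 1 ≤ b) {w : ℝ} (hw : w ∈ Set.Ioo (0:ℝ) 1) :
    Tg^[4] (gmap a (gmap b w)) = Tg^[2] w := by
  have hbw := gmap_mem hb hw
  show Tg (Tg (Tg (Tg (gmap a (gmap b w))))) = Tg (Tg w)
  rw [Tg_Tg_gmap ha hbw, Tg_Tg_gmap hb hw]

lemma comp2_mem {L : List (ℕ × ℕ)} (hL : ∀ p ∈ L, 1 ≤ p.1 ∧ 1 ≤ p.2) {u : ℝ}
    (hu : u ∈ Set.Ioo (0:ℝ) 1) : comp2 L u ∈ Set.Ioo (0:ℝ) 1 := by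
  induction L with
  | nil => simpa [comp2] using hu
  | cons p L ih =>
    have hp := hL p (List.mem_cons_self)
    have hrest : ∀ q ∈ L, 1 ≤ q.1 ∧ 1 ≤ q.2 := fun q hq => hL q (List.mem_cons_of_mem _ hq)
    exact gmap_mem hp.1 (gmap_mem hp.2 (ih hrest))

lemma comp2_irrational {L : List (ℕ × ℕ)} {u : ℝ} (hu : Irrational u) :
    Irrational (comp2 L u) := by
  induction L with
  | nil => exact hu
  | cons p L ih => exact gmap_irrational (gmap_irrational ih)

lemma comp2_iter {L : List (ℕ × ℕ)} (hL : ∀ p ∈ L, 1 ≤ p.1 ∧ 1 ≤ p.2) {u : ℝ}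
    (hu : u ∈ Set.Ioo (0:ℝ) 1) :
    Tg^[4 * L.length] (comp2 L u) = Tg^[2 * L.length] u := by
  induction L with
  | nil => simp [comp2]
  | cons p L ih =>
    have hp := hL p (List.mem_cons_self)
    have hrest : ∀ q ∈ L, 1 ≤ q.1 ∧ 1 ≤ q.2 := fun q hq => hL q (List.mem_cons_of_mem _ hq)
    have hw := comp2_mem hrest hu
    have h4 : Tg^[4] (comp2 (p :: L) u) = Tg^[2] (comp2 L u) := Tg4_pair hp.1 hp.2 hw
    have e1 : 4 * (p :: L).length = 4 * L.length + 4 := by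
      simp [List.length_cons]; ring
    have e2 : 2 * (p :: L).length = 2 + 2 * L.length := by
      simp [List.length_cons]; ring
    rw [e1, e2]
    calc Tg^[4 * L.length + 4] (comp2 (p :: L) u)
        = Tg^[4 * L.length] (Tg^[4] (comp2 (p :: L) u)) :=
          Function.iterate_add_apply Tg (4 * L.length) 4 _
      _ = Tg^[4 * L.length] (Tg^[2] (comp2 L u)) := by rw [h4]
      _ = Tg^[4 * L.length + 2] (comp2 L u) :=
          (Function.iterate_add_apply Tg (4 * L.length) 2 _).symm
      _ = Tg^[2 + 4 * L.length] (comp2 L u) := by rw [add_comm]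
      _ = Tg^[2] (Tg^[4 * L.length] (comp2 L u)) :=
          Function.iterate_add_apply Tg 2 (4 * L.length) _
      _ = Tg^[2] (Tg^[2 * L.length] u) := by rw [ih hrest]
      _ = Tg^[2 + 2 * L.length] u :=
          (Function.iterate_add_apply Tg 2 (2 * L.length) _).symm

lemma pair_contract {a b : ℕ} (ha : 1 ≤ a) (hb : 1 ≤ b) {w w' : ℝ}
    (hw : w ∈ Set.Ioo (0:ℝ) 1) (hw' : w' ∈ Set.Ioo (0:ℝ) 1) :
    |gmap a (gmap b w) - gmap a (gmap b w')| ≤ |w - w'| / 4 := by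
  have hA : (1:ℝ) ≤ a := by exact_mod_cast ha
  have hB : (1:ℝ) ≤ b := by exact_mod_cast hb
  have hbw : (0:ℝ) < (b:ℝ) + w := by linarith [hw.1]
  have hbw' : (0:ℝ) < (b:ℝ) + w' := by linarith [hw'.1]
  set P : ℝ := (a:ℝ) * ((b:ℝ) + w) + 1 with hPdef
  set P' : ℝ := (a:ℝ) * ((b:ℝ) + w') + 1 with hP'def
  have hP2 : (2:ℝ) ≤ P := by nlinarith [hw.1]
  have hP2' : (2:ℝ) ≤ P' := by nlinarith [hw'.1]
  have hPpos : (0:ℝ) < P := by linarith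
  have hP'pos : (0:ℝ) < P' := by linarith
  have hgb : gmap b w = ((b:ℝ) + w)⁻¹ := rfl
  have key : gmap a (gmap b w) - gmap a (gmap b w') = (w - w') / (P * P') := by
    show ((a:ℝ) + ((b:ℝ) + w)⁻¹)⁻¹ - ((a:ℝ) + ((b:ℝ) + w')⁻¹)⁻¹ = (w - w') / (P * P')
    rw [hPdef, hP'def]
    field_simp
    ring
  rw [key, abs_div, abs_of_pos (by positivity : (0:ℝ) < P * P')]
  rw [div_le_div_iff₀ (by positivity) (by norm_num : (0:ℝ) < 4)]
  have h4 : (4:ℝ) ≤ P * P' := by nlinarith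
  nlinarith [abs_nonneg (w - w')]

lemma comp2_contract {L : List (ℕ × ℕ)} (hL : ∀ p ∈ L, 1 ≤ p.1 ∧ 1 ≤ p.2) {u v : ℝ}
    (hu : u ∈ Set.Ioo (0:ℝ) 1) (hv : v ∈ Set.Ioo (0:ℝ) 1) :
    |comp2 L u - comp2 L v| ≤ (1/4) ^ L.length * |u - v| := by
  induction L with
  | nil => simp [comp2]
  | cons p L ih =>
    have hp := hL p (List.mem_cons_self)
    have hrest : ∀ q ∈ L, 1 ≤ q.1 ∧ 1 ≤ q.2 := fun q hq => hL q (List.mem_cons_of_mem _ hq)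
    have hw := comp2_mem hrest hu
    have hw' := comp2_mem hrest hv
    have hih := ih hrest
    calc |comp2 (p :: L) u - comp2 (p :: L) v|
        ≤ |comp2 L u - comp2 L v| / 4 := pair_contract hp.1 hp.2 hw hw'
      _ ≤ ((1/4) ^ L.length * |u - v|) / 4 := by linarith
      _ = (1/4) ^ (p :: L).length * |u - v| := by
          simp only [List.length_cons, pow_succ]; ring

lemma peel {x : ℝ} (hx : Irrational x) (hmemx : x ∈ Set.Ioo (0:ℝ) 1) :
    ∃ n : ℕ, 1 ≤ n ∧ ∃ z : ℝ, Irrational z ∧ z ∈ Set.Ioo (0:ℝ) 1 ∧ x = gmap n z := by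
  have hx0 : 0 < x := hmemx.1
  have hinv : 1 < x⁻¹ := one_lt_inv_iff₀.mpr ⟨hx0, hmemx.2⟩
  have hinvirr : Irrational x⁻¹ := hx.inv
  have hfl : 1 ≤ ⌊x⁻¹⌋ := Int.le_floor.mpr (by exact_mod_cast hinv.le)
  refine ⟨⌊x⁻¹⌋.toNat, by omega, Int.fract x⁻¹, ?_, ⟨?_, Int.fract_lt_one _⟩, ?_⟩
  · rw [Int.fract]
    exact hinvirr.sub_intCast _
  · rcases lt_or_eq_of_le (Int.fract_nonneg x⁻¹) with h | h
    · exact h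
    · exfalso
      have hfr : Int.fract x⁻¹ = x⁻¹ - ⌊x⁻¹⌋ := rfl
      exact hinvirr.ne_int ⌊x⁻¹⌋ (by linarith)
  · have hcast : ((⌊x⁻¹⌋.toNat : ℕ) : ℝ) = ((⌊x⁻¹⌋ : ℤ) : ℝ) := by
      exact_mod_cast congrArg (fun m : ℤ => (m : ℝ)) (Int.toNat_of_nonneg (by omega))
    show x = (((⌊x⁻¹⌋.toNat : ℕ) : ℝ) + Int.fract x⁻¹)⁻¹
    rw [hcast, Int.floor_add_fract, inv_inv]

lemma decomp (k : ℕ) : ∀ x : ℝ, Irrational x → x ∈ Set.Ioo (0:ℝ) 1 →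
    ∃ L : List (ℕ × ℕ), L.length = k ∧ (∀ p ∈ L, 1 ≤ p.1 ∧ 1 ≤ p.2) ∧
      ∃ y : ℝ, y ∈ Set.Ioo (0:ℝ) 1 ∧ x = comp2 L y := by
  induction k with
  | zero => intro x hx hm; exact ⟨[], rfl, by simp, x, hm, rfl⟩
  | succ k ih =>
    intro x hx hm
    obtain ⟨a, ha, z1, hz1irr, hz1m, hxe⟩ := peel hx hm
    obtain ⟨b, hb, z2, hz2irr, hz2m, hz1e⟩ := peel hz1irr hz1m
    obtain ⟨L, hlen, hall, y, hym, hye⟩ := ih z2 hz2irr hz2m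
    refine ⟨(a, b) :: L, by simp [hlen], ?_, y, hym, ?_⟩
    · intro p hp
      rcases List.mem_cons.mp hp with h | h
      · subst h; exact ⟨ha, hb⟩
      · exact hall p h
    · show x = gmap a (gmap b (comp2 L y))
      rw [← hye, ← hz1e, ← hxe]


lemma approx (α : ℝ) (hα : Irrational α) (hαm : α ∈ Set.Ioo (0:ℝ) 1)
    {x : ℝ} (hx : Irrational x) (hxm : x ∈ Set.Ioo (0:ℝ) 1) (k : ℕ) :
    ∃ β : ℝ, Irrational β ∧ β ∈ Set.Ioo (0:ℝ) 1 ∧ CFEquiv β α ∧ |β - x| ≤ (1/4) ^ k := by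
  obtain ⟨L, hlen, hall, y, hym, hye⟩ := decomp k x hx hxm
  refine ⟨comp2 L α, comp2_irrational hα, comp2_mem hall hαm, ?_, ?_⟩
  · refine ⟨4 * k, 2 * k, fun i => ?_⟩
    show ⌊Tg^[4*k + i] (comp2 L α)⌋ = ⌊Tg^[2*k + i] α⌋
    congr 1
    rw [add_comm (4*k) i, Function.iterate_add_apply, add_comm (2*k) i,
      Function.iterate_add_apply, ← hlen, comp2_iter hall hαm]
  · rw [hye]
    calc |comp2 L α - comp2 L y| ≤ (1/4)^L.length * |α - y| := comp2_contract hall hαm hym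
      _ ≤ (1/4)^k * 1 := by
          rw [hlen]
          have h1 : |α - y| ≤ 1 := by
            rw [abs_le]
            constructor <;> [linarith [hαm.1, hym.2]; linarith [hαm.2, hym.1]]
          have h2 : (0:ℝ) ≤ (1/4:ℝ)^k := by positivity
          nlinarith
      _ = (1/4)^k := mul_one _

lemma maxArc_small {β : ℝ} {ℓ : ℕ} (hℓ : 1 ≤ ℓ) (hβ0 : 0 < β) (hβ1 : β * ((ℓ:ℝ) + 1) < 1) :
    maxArc (circlePoints β ℓ) = 1 - (ℓ:ℝ) * β := by
  set P := circlePoints β ℓ with hP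
  have hℓ0 : (1:ℝ) ≤ (ℓ:ℝ) := by exact_mod_cast hℓ
  have hjle : ∀ j : ℕ, j ≤ ℓ → (j:ℝ) * β ≤ (ℓ:ℝ) * β := by
    intro j hj
    have : (j:ℝ) ≤ (ℓ:ℝ) := by exact_mod_cast hj
    nlinarith
  have hfr : ∀ j : ℕ, 1 ≤ j → j ≤ ℓ → Int.fract (-(j:ℝ) * β) = 1 - (j:ℝ) * β := by
    intro j h1 h2
    have hj1 : (1:ℝ) ≤ (j:ℝ) := by exact_mod_cast h1
    have h : -(j:ℝ) * β = ((-1 : ℤ) : ℝ) + (1 - (j:ℝ)*β) := by push_cast; ring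
    rw [h, Int.fract_intCast_add]
    refine Int.fract_eq_self.mpr ⟨by nlinarith [hjle j h2], by nlinarith⟩
  have h0P : (0:ℝ) ∈ P := ⟨0, Nat.zero_le _, by norm_num⟩
  have hmemP : ∀ j : ℕ, 1 ≤ j → j ≤ ℓ → (1 - (j:ℝ) * β) ∈ P := by
    intro j h1 h2
    exact ⟨j, h2, (hfr j h1 h2).symm⟩
  have hbdd : ∀ x : ℝ, BddBelow {d : ℝ | 0 < d ∧ Int.fract (x + d) ∈ P} :=
    fun x => ⟨0, fun d hd => hd.1.le⟩
  have hmem_big : (1 - (ℓ:ℝ)*β) ∈ {d : ℝ | 0 < d ∧ Int.fract ((0:ℝ) + d) ∈ P} := by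
    constructor
    · nlinarith
    · rw [zero_add, Int.fract_eq_self.mpr ⟨by nlinarith, by nlinarith⟩]
      exact hmemP ℓ hℓ le_rfl
  have hlb : ∀ d ∈ {d : ℝ | 0 < d ∧ Int.fract ((0:ℝ) + d) ∈ P}, 1 - (ℓ:ℝ)*β ≤ d := by
    intro d hd
    by_contra hlt
    push_neg at hlt
    have hd1 : d < 1 := by nlinarith [hd.1]
    have he : Int.fract ((0:ℝ) + d) = d := by
      rw [zero_add]; exact Int.fract_eq_self.mpr ⟨hd.1.le, hd1⟩
    obtain ⟨hdpos, hd2⟩ := hd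
    rw [he] at hd2
    obtain ⟨j, hj, hdj⟩ := hd2
    rcases Nat.eq_zero_or_pos j with h0 | h1
    · subst h0
      norm_num at hdj
      linarith
    · rw [hfr j h1 hj] at hdj
      have := hjle j hj
      nlinarith
  have harc0 : arcLen P 0 = 1 - (ℓ:ℝ)*β :=
    le_antisymm (csInf_le (hbdd 0) hmem_big) (le_csInf ⟨_, hmem_big⟩ hlb)
  have harcle : ∀ j : ℕ, 1 ≤ j → j ≤ ℓ → arcLen P (Int.fract (-(j:ℝ)*β)) ≤ β := by
    intro j h1 h2
    apply csInf_le (hbdd _)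
    refine ⟨hβ0, ?_⟩
    obtain ⟨m, rfl⟩ : ∃ m, j = m + 1 := ⟨j - 1, by omega⟩
    rw [hfr (m+1) h1 h2]
    have he : (1 - ((m+1:ℕ):ℝ)*β) + β = ((1:ℤ):ℝ) + (-(m:ℝ)*β) := by push_cast; ring
    rw [he, Int.fract_intCast_add]
    exact ⟨m, by omega, rfl⟩
  have hgreat : IsGreatest (arcLen P '' P) (1 - (ℓ:ℝ)*β) := by
    constructor
    · exact ⟨0, h0P, harc0⟩
    · rintro y ⟨x, hxP, rfl⟩
      obtain ⟨j, hj, rfl⟩ := hxP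
      rcases Nat.eq_zero_or_pos j with h0 | h1
      · subst h0
        have e : Int.fract (-((0:ℕ):ℝ) * β) = 0 := by norm_num
        rw [e, harc0]
      · calc arcLen P (Int.fract (-(j:ℝ)*β)) ≤ β := harcle j h1 hj
          _ ≤ 1 - (ℓ:ℝ)*β := by nlinarith
  exact hgreat.csSup_eq


theorem maxArc_dense_over_equivalent_slopes (α : ℝ) (hα : Irrational α)
    (hmem : α ∈ Set.Ioo (0:ℝ) 1) (ℓ : ℕ) (hℓ : 2 ≤ ℓ) :
    Set.Ioo (1 / ((ℓ : ℝ) + 1)) 1 ⊆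
      closure {y : ℝ | ∃ β : ℝ, Irrational β ∧ CFEquiv β α ∧ y = maxArc (circlePoints β ℓ)} := by
  intro t ht
  rw [Metric.mem_closure_iff]
  intro ε hε
  have hℓ2 : (2:ℝ) ≤ (ℓ:ℝ) := by exact_mod_cast hℓ
  have hℓ0 : (0:ℝ) < (ℓ:ℝ) := by linarith
  set β₀ := (1 - t) / (ℓ:ℝ) with hβ₀def
  have ht1 : 1 / ((ℓ:ℝ) + 1) < t := ht.1
  have ht2 : t < 1 := ht.2
  have hβ₀pos : 0 < β₀ := div_pos (by linarith) hℓ0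
  have hβ₀m : β₀ * ((ℓ:ℝ)+1) < 1 := by
    have h1 : 1 < t * ((ℓ:ℝ)+1) := by
      rw [div_lt_iff₀ (by linarith : (0:ℝ) < (ℓ:ℝ)+1)] at ht1
      linarith
    rw [hβ₀def, div_mul_eq_mul_div, div_lt_one hℓ0]
    nlinarith
  set δ := min (ε / (2*(ℓ:ℝ))) (min (β₀/2) ((1 - β₀*((ℓ:ℝ)+1)) / (2*((ℓ:ℝ)+1)))) with hδdef
  have hδ1 : δ ≤ ε / (2*(ℓ:ℝ)) := min_le_left _ _
  have hδ2 : δ ≤ β₀/2 := le_trans (min_le_right _ _) (min_le_left _ _)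
  have hδ3 : δ ≤ (1 - β₀*((ℓ:ℝ)+1)) / (2*((ℓ:ℝ)+1)) :=
    le_trans (min_le_right _ _) (min_le_right _ _)
  have hδpos : 0 < δ := by
    apply lt_min (by positivity) (lt_min (by positivity) ?_)
    have : 0 < 1 - β₀*((ℓ:ℝ)+1) := by linarith
    positivity
  obtain ⟨x, hx⟩ := Metric.dense_iff.mp dense_irrational β₀ (δ/2) (by positivity)
  have hxirr : Irrational x := hx.2
  have hxd : |x - β₀| < δ/2 := by
    have := hx.1
    rw [Metric.mem_ball, Real.dist_eq] at this
    exact this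
  have hxd' := abs_lt.mp hxd
  have hβ₀small : β₀ < 1/3 := by nlinarith
  have hxIoo : x ∈ Set.Ioo (0:ℝ) 1 := by
    constructor
    · nlinarith
    · nlinarith
  obtain ⟨k, hk⟩ := exists_pow_lt_of_lt_one (show (0:ℝ) < δ/2 by positivity)
    (by norm_num : (1/4:ℝ) < 1)
  obtain ⟨β, hβirr, hβIoo, hβCF, hβx⟩ := approx α hα hmem hxirr hxIoo k
  have hβd : |β - β₀| < δ := by
    calc |β - β₀| ≤ |β - x| + |x - β₀| := abs_sub_le β x β₀
      _ < δ/2 + δ/2 := by have := hβx; linarith [hk]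
      _ = δ := by ring
  have hβd' := abs_lt.mp hβd
  have hβℓ : β * ((ℓ:ℝ)+1) < 1 := by
    have hδ3' : δ * (2*((ℓ:ℝ)+1)) ≤ 1 - β₀*((ℓ:ℝ)+1) :=
      (le_div_iff₀ (by linarith : (0:ℝ) < 2*((ℓ:ℝ)+1))).mp hδ3
    nlinarith [mul_lt_mul_of_pos_right hβd'.2 (show (0:ℝ) < (ℓ:ℝ)+1 by linarith), hδ3']
  refine ⟨1 - (ℓ:ℝ)*β, ⟨β, hβirr, hβCF,
    (maxArc_small (by omega) hβIoo.1 hβℓ).symm⟩, ?_⟩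
  have hℓβ₀ : (ℓ:ℝ)*β₀ = 1 - t := by
    rw [hβ₀def]; field_simp
  rw [Real.dist_eq]
  have he : t - (1 - (ℓ:ℝ)*β) = (ℓ:ℝ)*(β - β₀) := by
    rw [mul_sub]; linarith
  rw [he, abs_mul, abs_of_pos hℓ0]
  have hfin : (ℓ:ℝ) * (ε/(2*(ℓ:ℝ))) = ε/2 := by field_simp
  nlinarith [abs_nonneg (β - β₀)]
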